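/- arXiv:1904.10155 — 2 statements merged into one kernel-verified Lean document; each statement's English description precedes it below -/
import Mathlib

section
/- Let d, m, k be positive integers with m ≤ k ≤ d, let A ∈ ℝ^{d×d} be symmetric positive semidefinite, and let W_t belong to the FSPCA feasible set F(d,m,k). Define the proxy matrix P_t = A W_t (W_tᵀ A W_t)† W_tᵀ A, and let W̃ ∈ F(d,m,k) be any maximizer of Tr(Wᵀ P_t W) over F(d,m,k). Then Tr(W_tᵀ A W_t) ≤ Tr(W̃ᵀ A W̃). Moreover, if I is the set of indices of nonzero rows of W̃ (so card(I) ≤ k) and W_{t+1} ∈ F(d,m,k) maximizes Tr(Wᵀ A W) over the matrices in F(d,m,k) whose nonzero rows are contained in I, then Tr(W_tᵀ A W_t) ≤ Tr(W_{t+1}ᵀ A W_{t+1}). -/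
open Matrix


lemma psd_trace_nonneg {n : Type*} [Fintype n] [DecidableEq n] {M : Matrix n n ℝ}
    (h : M.PosSemidef) : 0 ≤ M.trace := by
  rw [Matrix.trace]
  apply Finset.sum_nonneg
  intro i _
  have := h.dotProduct_mulVec_nonneg (Pi.single i 1)
  simpa [Matrix.diag] using this

lemma pinv_symm {n : Type*} [Fintype n] [DecidableEq n] {C B : Matrix n n ℝ} (hC : Cᵀ = C)
    (h1 : C*B*C = C) (h2 : B*C*B = B) (h3 : (C*B)ᵀ = C*B) (h4 : (B*C)ᵀ = B*C) : Bᵀ = B := by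
  have hYC : Bᵀ*C = C*B := by rw [← h3, Matrix.transpose_mul, hC]
  have hCY : C*Bᵀ = B*C := by rw [← h4, Matrix.transpose_mul, hC]
  have hCYsym : (C*Bᵀ)ᵀ = C*Bᵀ := by rw [hCY]; exact h4
  have e1 : C*Bᵀ*C = C := by
    have := congrArg Matrix.transpose h1
    simp only [Matrix.transpose_mul, hC] at this
    rw [Matrix.mul_assoc]; exact this
  have e2 : Bᵀ*C*Bᵀ = Bᵀ := by
    have := congrArg Matrix.transpose h2
    simp only [Matrix.transpose_mul, hC] at this
    rw [Matrix.mul_assoc]; exact this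
  have claim : C*B = C*Bᵀ := by
    calc C*B = C*Bᵀ*C*B := by rw [e1]
      _ = (C*Bᵀ)*(C*B) := by simp only [Matrix.mul_assoc]
      _ = ((C*B)ᵀ*(C*Bᵀ)ᵀ)ᵀ := by
          simp [Matrix.transpose_mul, Matrix.transpose_transpose, Matrix.mul_assoc, hC]
      _ = ((C*B)*(C*Bᵀ))ᵀ := by rw [h3, hCYsym]
      _ = ((C*B*C)*Bᵀ)ᵀ := by simp only [Matrix.mul_assoc]
      _ = (C*Bᵀ)ᵀ := by rw [h1]
      _ = C*Bᵀ := hCYsym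
  calc Bᵀ = Bᵀ*C*Bᵀ := e2.symm
    _ = (C*B)*Bᵀ := by rw [hYC]
    _ = (C*Bᵀ)*Bᵀ := by rw [claim]
    _ = (B*C)*Bᵀ := by rw [hCY]
    _ = B*(C*Bᵀ) := Matrix.mul_assoc _ _ _
    _ = B*(C*B) := by rw [← claim]
    _ = B*C*B := (Matrix.mul_assoc _ _ _).symm
    _ = B := h2

/-- The FSPCA feasible set: `Wᵀ W = I_m` and `W` has at most `k` nonzero rows. -/
def feasible (d m k : ℕ) (W : Matrix (Fin d) (Fin m) ℝ) : Prop :=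
  Wᵀ * W = 1 ∧ {i | W i ≠ 0}.ncard ≤ k

/-- ascent step of IPU: let `Wt ∈ F(d,m,k)`, let `Bd` be the
Moore–Penrose pseudoinverse of `Wtᵀ A Wt`, and let `P = A Wt (Wtᵀ A Wt)† Wtᵀ A`.
If `Wtl ∈ F(d,m,k)` maximizes `Tr(Wᵀ P W)` over `F(d,m,k)`, then
`Tr(Wtᵀ A Wt) ≤ Tr(Wtlᵀ A Wtl)`; moreover, any `Wn ∈ F(d,m,k)` whose nonzero
rows are contained in those of `Wtl` and which maximizes `Tr(Wᵀ A W)` among such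
matrices also satisfies `Tr(Wtᵀ A Wt) ≤ Tr(Wnᵀ A Wn)`. -/
theorem ipu_ascent (d m k : ℕ) (hm : 0 < m) (hmk : m ≤ k) (hkd : k ≤ d)
    (A : Matrix (Fin d) (Fin d) ℝ) (hA : A.PosSemidef)
    (Wt : Matrix (Fin d) (Fin m) ℝ) (hWt : feasible d m k Wt)
    (Bd : Matrix (Fin m) (Fin m) ℝ)
    (h1 : (Wtᵀ * A * Wt) * Bd * (Wtᵀ * A * Wt) = Wtᵀ * A * Wt)
    (h2 : Bd * (Wtᵀ * A * Wt) * Bd = Bd)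
    (h3 : ((Wtᵀ * A * Wt) * Bd)ᵀ = (Wtᵀ * A * Wt) * Bd)
    (h4 : (Bd * (Wtᵀ * A * Wt))ᵀ = Bd * (Wtᵀ * A * Wt))
    (P : Matrix (Fin d) (Fin d) ℝ) (hP : P = A * Wt * Bd * Wtᵀ * A)
    (Wtl : Matrix (Fin d) (Fin m) ℝ) (hWtl : feasible d m k Wtl)
    (hWtlmax : ∀ W : Matrix (Fin d) (Fin m) ℝ, feasible d m k W →
      (Wᵀ * P * W).trace ≤ (Wtlᵀ * P * Wtl).trace) :
    (Wtᵀ * A * Wt).trace ≤ (Wtlᵀ * A * Wtl).trace ∧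
    ∀ Wn : Matrix (Fin d) (Fin m) ℝ, feasible d m k Wn →
      {i | Wn i ≠ 0} ⊆ {i | Wtl i ≠ 0} →
      (∀ W : Matrix (Fin d) (Fin m) ℝ, feasible d m k W →
        {i | W i ≠ 0} ⊆ {i | Wtl i ≠ 0} →
        (Wᵀ * A * W).trace ≤ (Wnᵀ * A * Wn).trace) →
      (Wtᵀ * A * Wt).trace ≤ (Wnᵀ * A * Wn).trace := by
  subst hP
  have hAsym : Aᵀ = A := by
    have := hA.1.eq
    rwa [Matrix.conjTranspose_eq_transpose_of_trivial] at this
  have hCsym : (Wtᵀ*A*Wt)ᵀ = Wtᵀ*A*Wt := by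
    simp [Matrix.transpose_mul, Matrix.mul_assoc, hAsym]
  have hBsym : Bdᵀ = Bd := pinv_symm hCsym h1 h2 h3 h4
  obtain ⟨S, hSp, hSS⟩ : ∃ S : Matrix (Fin d) (Fin d) ℝ, S.PosSemidef ∧ S*S = A :=
    by open scoped MatrixOrder in exact ⟨CFC.sqrt A, (CFC.sqrt_nonneg A).posSemidef, CFC.sqrt_mul_sqrt_self A hA.nonneg⟩
  have hSsym : Sᵀ = S := by
    rw [← Matrix.conjTranspose_eq_transpose_of_trivial]; exact hSp.1
  have hMM : (Wtᵀ*S)*(S*Wt) = Wtᵀ*A*Wt := by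
    rw [← hSS]; simp only [Matrix.mul_assoc]
  have hQQ : (S*Wt*Bd*(Wtᵀ*S))*(S*Wt*Bd*(Wtᵀ*S)) = S*Wt*Bd*(Wtᵀ*S) := by
    have e : (S*Wt*Bd*(Wtᵀ*S))*(S*Wt*Bd*(Wtᵀ*S))
        = S*Wt*(Bd*((Wtᵀ*S)*(S*Wt))*Bd)*(Wtᵀ*S) := by
      simp only [Matrix.mul_assoc]
    rw [e, hMM, h2]
  have hQsym : (S*Wt*Bd*(Wtᵀ*S))ᵀ = S*Wt*Bd*(Wtᵀ*S) := by
    simp [Matrix.transpose_mul, Matrix.transpose_transpose, Matrix.mul_assoc, hSsym, hBsym]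
  have hprojPSD : ((1 : Matrix (Fin d) (Fin d) ℝ) - S*Wt*Bd*(Wtᵀ*S)).PosSemidef := by
    have h1q : ((1:Matrix (Fin d) (Fin d) ℝ) - S*Wt*Bd*(Wtᵀ*S))ᵀ = 1 - S*Wt*Bd*(Wtᵀ*S) := by
      rw [Matrix.transpose_sub, Matrix.transpose_one, hQsym]
    have h2q : ((1:Matrix (Fin d) (Fin d) ℝ) - S*Wt*Bd*(Wtᵀ*S))*(1 - S*Wt*Bd*(Wtᵀ*S))
        = 1 - S*Wt*Bd*(Wtᵀ*S) := by
      simp only [mul_sub, sub_mul, hQQ, one_mul, mul_one]; abel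
    have := Matrix.posSemidef_conjTranspose_mul_self
      ((1 : Matrix (Fin d) (Fin d) ℝ) - S*Wt*Bd*(Wtᵀ*S))
    rwa [Matrix.conjTranspose_eq_transpose_of_trivial, h1q, h2q] at this
  have hAmP : (A - A*Wt*Bd*Wtᵀ*A).PosSemidef := by
    have hps := hprojPSD.mul_mul_conjTranspose_same S
    rw [Matrix.conjTranspose_eq_transpose_of_trivial, hSsym] at hps
    have e : S*((1:Matrix (Fin d) (Fin d) ℝ) - S*Wt*Bd*(Wtᵀ*S))*S = A - A*Wt*Bd*Wtᵀ*A := by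
      simp only [mul_sub, sub_mul, mul_one, one_mul]
      have e2 : S*(S*Wt*Bd*(Wtᵀ*S))*S = (S*S)*Wt*Bd*Wtᵀ*(S*S) := by
        simp only [Matrix.mul_assoc]
      rw [e2, hSS]
    rwa [e] at hps
  have hle : ∀ W : Matrix (Fin d) (Fin m) ℝ,
      (Wᵀ*(A*Wt*Bd*Wtᵀ*A)*W).trace ≤ (Wᵀ*A*W).trace := by
    intro W
    have hpsd := hAmP.conjTranspose_mul_mul_same W
    rw [Matrix.conjTranspose_eq_transpose_of_trivial] at hpsd
    have e : Wᵀ*(A - A*Wt*Bd*Wtᵀ*A)*W = Wᵀ*A*W - Wᵀ*(A*Wt*Bd*Wtᵀ*A)*W := by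
      rw [Matrix.mul_sub, Matrix.sub_mul]
    rw [e] at hpsd
    have h0 := psd_trace_nonneg hpsd
    rw [Matrix.trace_sub] at h0
    linarith
  have htrP : (Wtᵀ*(A*Wt*Bd*Wtᵀ*A)*Wt).trace = (Wtᵀ*A*Wt).trace := by
    have e : Wtᵀ*(A*Wt*Bd*Wtᵀ*A)*Wt = (Wtᵀ*A*Wt)*Bd*(Wtᵀ*A*Wt) := by
      simp only [Matrix.mul_assoc]
    rw [e, h1]
  have part1 : (Wtᵀ*A*Wt).trace ≤ (Wtlᵀ*A*Wtl).trace := by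
    have hb := hWtlmax Wt hWt
    have hc := hle Wtl
    linarith
  refine ⟨part1, ?_⟩
  intro Wn hWn hsub hmax
  have := hmax Wtl hWtl (fun i hi => hi)
  linarith
end

section
/- Let d, m, k be positive integers with m ≤ k ≤ d, let A ∈ ℝ^{d×d} be symmetric positive semidefinite, and let B ∈ ℝ^{d×d} be symmetric positive semidefinite with rank(B) ≤ m and A − B positive semidefinite. Then the maximum of Tr(Wᵀ A W) over the FSPCA feasible set F(d,m,k) is at least (k/d) · Tr(B). -/
open Matrix Finset Module
open scoped RealInnerProductSpace

noncomputable section FSPCAAux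

lemma topk_avg {d k : ℕ} (hkd : k ≤ d) (f : Fin d → ℝ) :
    ∃ S : Finset (Fin d), S.card = k ∧
      (k : ℝ) * ∑ i, f i ≤ (d : ℝ) * ∑ i ∈ S, f i := by
  obtain ⟨S, hS, hmax⟩ := Finset.exists_max_image
    ((Finset.univ : Finset (Fin d)).powersetCard k) (fun T => ∑ i ∈ T, f i)
    (by
      obtain ⟨T, _, hT⟩ := Finset.exists_subset_card_eq (by simpa using hkd :
        k ≤ (Finset.univ : Finset (Fin d)).card)
      exact ⟨T, by simp [Finset.mem_powersetCard, hT]⟩)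
  have hScard : S.card = k := (Finset.mem_powersetCard.mp hS).2
  refine ⟨S, hScard, ?_⟩
  have key : ∀ i ∈ S, ∀ j ∈ Sᶜ, f j ≤ f i := by
    intro i hi j hj
    rw [Finset.mem_compl] at hj
    have hij : j ≠ i := fun h => hj (h ▸ hi)
    set T := insert j (S.erase i) with hT
    have hjT : j ∉ S.erase i := fun h => hj (Finset.mem_of_mem_erase h)
    have hTcard : T.card = k := by
      have hk1 : 0 < k := hScard ▸ Finset.card_pos.mpr ⟨i, hi⟩
      rw [hT, Finset.card_insert_of_notMem hjT, Finset.card_erase_of_mem hi, hScard]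
      omega
    have hTsum : ∑ x ∈ T, f x ≤ ∑ x ∈ S, f x :=
      hmax T (Finset.mem_powersetCard.mpr ⟨Finset.subset_univ _, hTcard⟩)
    have h1 : ∑ x ∈ T, f x = f j + ∑ x ∈ S.erase i, f x := by
      rw [hT, Finset.sum_insert hjT]
    have h2 : ∑ x ∈ S, f x = f i + ∑ x ∈ S.erase i, f x := by
      rw [Finset.add_sum_erase _ _ hi]
    linarith
  have hcomp : (Sᶜ.card : ℝ) = (d : ℝ) - k := by
    have := Finset.card_compl S
    simp only [Fintype.card_fin] at this
    rw [this, hScard, Nat.cast_sub hkd]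
  have h1 : (S.card : ℝ) * ∑ j ∈ Sᶜ, f j ≤ (Sᶜ.card : ℝ) * ∑ i ∈ S, f i := by
    have step : ∀ i ∈ S, ∑ j ∈ Sᶜ, f j ≤ (Sᶜ.card : ℝ) * f i := by
      intro i hi
      calc ∑ j ∈ Sᶜ, f j ≤ ∑ _j ∈ Sᶜ, f i := Finset.sum_le_sum (fun j hj => key i hi j hj)
        _ = (Sᶜ.card : ℝ) * f i := by rw [Finset.sum_const, nsmul_eq_mul]
    calc (S.card : ℝ) * ∑ j ∈ Sᶜ, f j = ∑ _i ∈ S, ∑ j ∈ Sᶜ, f j := by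
          rw [Finset.sum_const, nsmul_eq_mul]
      _ ≤ ∑ i ∈ S, (Sᶜ.card : ℝ) * f i := Finset.sum_le_sum step
      _ = (Sᶜ.card : ℝ) * ∑ i ∈ S, f i := by rw [Finset.mul_sum]
  have hsplit : ∑ i ∈ S, f i + ∑ i ∈ Sᶜ, f i = ∑ i, f i := Finset.sum_add_sum_compl S f
  rw [hScard] at h1
  rw [hcomp] at h1
  nlinarith [h1, hsplit]

/-- The submodule of `EuclideanSpace ℝ (Fin d)` of vectors supported on `S`. -/
def suppSub (d : ℕ) (S : Finset (Fin d)) : Submodule ℝ (EuclideanSpace ℝ (Fin d)) where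
  carrier := {x | ∀ i ∉ S, x i = 0}
  add_mem' := by
    intro a b ha hb i hi
    have : (a + b) i = a i + b i := rfl
    rw [this, ha i hi, hb i hi, add_zero]
  zero_mem' := by intro i _; rfl
  smul_mem' := by
    intro c a ha i hi
    have : (c • a) i = c * a i := rfl
    rw [this, ha i hi, mul_zero]

lemma mem_suppSub {d : ℕ} {S : Finset (Fin d)} {x : EuclideanSpace ℝ (Fin d)} :
    x ∈ suppSub d S ↔ ∀ i ∉ S, x i = 0 := Iff.rfl

/-- A linear equiv between `suppSub d S` and `S → ℝ`. -/
def suppSubEquiv (d : ℕ) (S : Finset (Fin d)) : suppSub d S ≃ₗ[ℝ] (S → ℝ) where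
  toFun x j := (x : EuclideanSpace ℝ (Fin d)) (j : Fin d)
  map_add' x y := rfl
  map_smul' c x := rfl
  invFun g := ⟨(WithLp.equiv 2 (Fin d → ℝ)).symm
      (fun i => if h : i ∈ S then g ⟨i, h⟩ else 0), by
    intro i hi
    simp [hi]⟩
  left_inv x := by
    apply Subtype.ext
    ext i
    by_cases hi : i ∈ S
    · simp [hi]
    · simp [hi, x.2 i hi]
  right_inv g := by
    funext j
    simp

lemma finrank_suppSub (d : ℕ) (S : Finset (Fin d)) :
    finrank ℝ (suppSub d S) = S.card := by
  rw [(suppSubEquiv d S).finrank_eq, Module.finrank_fintype_fun_eq_card, Fintype.card_coe]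

lemma psd_trace_nonneg_s10 {d : ℕ} {M : Matrix (Fin d) (Fin d) ℝ} (hM : M.PosSemidef) :
    0 ≤ M.trace := by
  rw [Matrix.trace]
  apply Finset.sum_nonneg
  intro i _
  exact hM.diag_nonneg

end FSPCAAux

open Matrix

set_option maxHeartbeats 1600000 in
/-- for PSD `A` and PSD `B` with `rank B ≤ m` and `A - B` PSD, the
maximum of `Tr(Wᵀ A W)` over `F(d,m,k)` is at least `(k/d)·Tr(B)`: i.e. some
feasible `W` attains at least this value. -/
theorem fspca_max_ge_fraction_trace_lowrank_part (d m k : ℕ) (hd : 0 < d)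
    (hm : 0 < m) (hmk : m ≤ k) (hkd : k ≤ d)
    (A B : Matrix (Fin d) (Fin d) ℝ) (hA : A.PosSemidef) (hB : B.PosSemidef)
    (hrankB : B.rank ≤ m) (hAB : (A - B).PosSemidef) :
    ∃ W : Matrix (Fin d) (Fin m) ℝ, feasible d m k W ∧
      (k : ℝ) / (d : ℝ) * B.trace ≤ (Wᵀ * A * W).trace := by
  classical
  obtain ⟨S, hScard, hSavg⟩ := topk_avg hkd (fun i => B i i)
  set P : Matrix (Fin d) (Fin d) ℝ :=
    Matrix.diagonal (fun i => if i ∈ S then (1 : ℝ) else 0) with hP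
  set C : Matrix (Fin d) (Fin d) ℝ := P * B * P with hC
  have hCrank : C.rank ≤ m :=
    le_trans (le_trans (Matrix.rank_mul_le_left (P * B) P)
      (Matrix.rank_mul_le_right P B)) hrankB
  have hCsupp : ∀ i ∉ S, ∀ j, C i j = 0 := by
    intro i hi j
    rw [hC, Matrix.mul_assoc, hP, Matrix.diagonal_mul]
    simp [hi]
  have hCtrace : C.trace = ∑ i ∈ S, B i i := by
    rw [Matrix.trace]
    have hdiag : ∀ i, C.diag i = if i ∈ S then B i i else 0 := by
      intro i
      rw [Matrix.diag_apply, hC, hP, Matrix.mul_diagonal, Matrix.diagonal_mul]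
      by_cases hi : i ∈ S <;> simp [hi]
    rw [Finset.sum_congr rfl (fun i _ => hdiag i)]
    simp [Finset.sum_ite_mem]
  set R : Submodule ℝ (EuclideanSpace ℝ (Fin d)) :=
    LinearMap.range (Matrix.toEuclideanLin C) with hR
  have hRrank : finrank ℝ R = C.rank :=
    (Matrix.rank_eq_finrank_range_toLin C (PiLp.basisFun 2 ℝ (Fin d))
      (PiLp.basisFun 2 ℝ (Fin d))).symm
  set U : Submodule ℝ (EuclideanSpace ℝ (Fin d)) := suppSub d S with hU
  have hRU : R ≤ U := by
    rintro x ⟨y, rfl⟩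
    rw [hU, mem_suppSub]
    intro i hi
    have hrfl : Matrix.toEuclideanLin C y
        = (WithLp.equiv 2 (Fin d → ℝ)).symm (C *ᵥ (WithLp.equiv 2 (Fin d → ℝ)) y) := rfl
    rw [hrfl]
    simp [Matrix.mulVec, dotProduct, hCsupp i hi]
  have hUfin : finrank ℝ U = k := by rw [hU, finrank_suppSub, hScard]
  have hrm : finrank ℝ R ≤ m := by rw [hRrank]; exact hCrank
  have hrk : finrank ℝ R ≤ k := le_trans hrm hmk
  set r := finrank ℝ R with hr
  set bR := stdOrthonormalBasis ℝ R with hbR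
  set v : Fin k → U := fun j =>
    if h : (j : ℕ) < r then
      ⟨(bR ⟨(j : ℕ), h⟩ : EuclideanSpace ℝ (Fin d)), hRU (bR ⟨(j : ℕ), h⟩).2⟩
    else 0 with hv
  have hveq : ∀ (jj : Fin k) (h : (jj : ℕ) < r),
      ((v jj : U) : EuclideanSpace ℝ (Fin d))
        = (bR ⟨(jj : ℕ), h⟩ : EuclideanSpace ℝ (Fin d)) := by
    intro jj h
    rw [hv]
    simp only [dif_pos h]
  have hvon : Orthonormal ℝ (Set.restrict {j : Fin k | (j : ℕ) < r} v) := by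
    rw [orthonormal_iff_ite]
    rintro ⟨j, hj⟩ ⟨j', hj'⟩
    have hj2 : (j : ℕ) < r := hj
    have hj'2 : (j' : ℕ) < r := hj'
    change ⟪v j, v j'⟫ = _
    rw [Submodule.coe_inner,
      hveq j hj2, hveq j' hj'2,
      ← Submodule.coe_inner R (bR ⟨(j : ℕ), hj2⟩) (bR ⟨(j' : ℕ), hj'2⟩),
      orthonormal_iff_ite.mp bR.orthonormal]
    by_cases h : j = j'
    · subst h
      simp
    · have h1 : (⟨(j : ℕ), hj2⟩ : Fin r) ≠ ⟨(j' : ℕ), hj'2⟩ := by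
        intro hcon
        exact h (Fin.ext (by simpa using congrArg Fin.val hcon))
      have h2 : (⟨j, hj⟩ : {j : Fin k | (j : ℕ) < r}) ≠ ⟨j', hj'⟩ := by
        intro hcon
        exact h (by simpa using congrArg Subtype.val hcon)
      rw [if_neg h1, if_neg h2]
  obtain ⟨b, hb⟩ := hvon.exists_orthonormalBasis_extension_of_card_eq
    (by simp [hUfin]) (v := v)
  set w : Fin m → EuclideanSpace ℝ (Fin d) := fun j => (b (Fin.castLE hmk j) : _) with hw
  set W : Matrix (Fin d) (Fin m) ℝ := Matrix.of (fun i j => w j i) with hW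
  have hinner : ∀ (x y : EuclideanSpace ℝ (Fin d)), ⟪x, y⟫ = ∑ i, x i * y i := by
    intro x y
    rw [PiLp.inner_apply]
    simp [RCLike.inner_apply, mul_comm]
  have hWsupp : ∀ i ∉ S, ∀ j, W i j = 0 := by
    intro i hi j
    exact (b (Fin.castLE hmk j)).2 i hi
  have hworth : ∀ j j', ⟪w j, w j'⟫ = if j = j' then 1 else 0 := by
    intro j j'
    rw [hw]
    have : ⟪((b (Fin.castLE hmk j) : U) : EuclideanSpace ℝ (Fin d)),
        ((b (Fin.castLE hmk j') : U) : EuclideanSpace ℝ (Fin d))⟫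
        = ⟪b (Fin.castLE hmk j), b (Fin.castLE hmk j')⟫ := (Submodule.coe_inner U _ _).symm
    rw [this, orthonormal_iff_ite.mp b.orthonormal]
    by_cases h : j = j'
    · subst h; simp
    · rw [if_neg (fun hcon => h (Fin.castLE_injective hmk hcon)), if_neg h]
  have hfeas : feasible d m k W := by
    constructor
    · ext j j'
      have : (Wᵀ * W) j j' = ∑ i, w j i * w j' i := by
        simp [Matrix.mul_apply, hW]
      rw [this, ← hinner, hworth, Matrix.one_apply]
    · have hsub : {i | W i ≠ 0} ⊆ (S : Set (Fin d)) := by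
        intro i hi
        by_contra hiS
        exact hi (funext (fun j => hWsupp i hiS j))
      calc {i | W i ≠ 0}.ncard ≤ (S : Set (Fin d)).ncard :=
            Set.ncard_le_ncard hsub S.finite_toSet
        _ = S.card := Set.ncard_coe_finset S
        _ = k := hScard
  refine ⟨W, hfeas, ?_⟩
  -- key expansion lemma
  have hexp : ∀ x ∈ R, ∀ i : Fin d,
      ∑ j : Fin m, ⟪w j, x⟫ * (w j) i = x i := by
    intro x hx i
    set xU : U := ⟨x, hRU hx⟩ with hxU
    have hzero : ∀ jk : Fin k, ¬ ((jk : ℕ) < r) → ⟪b jk, xU⟫ = 0 := by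
      intro jk hjk
      have hxRrepr : ∑ t : Fin r, ⟪bR t, (⟨x, hx⟩ : R)⟫ • bR t = (⟨x, hx⟩ : R) :=
        bR.sum_repr' _
      have hι : ∀ t : Fin r, ((t : ℕ) : ℕ) < k := fun t => lt_of_lt_of_le t.2 hrk
      have hbι : ∀ t : Fin r,
          (b ⟨(t : ℕ), hι t⟩ : EuclideanSpace ℝ (Fin d))
            = (bR t : EuclideanSpace ℝ (Fin d)) := by
        intro t
        have hmem : (⟨(t : ℕ), hι t⟩ : Fin k) ∈ {j : Fin k | (j : ℕ) < r} := t.2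
        rw [hb _ hmem, hv]
        simp only [dif_pos (show ((⟨(t : ℕ), hι t⟩ : Fin k) : ℕ) < r from t.2)]
        rfl
      have hxUsum : xU = ∑ t : Fin r, ⟪bR t, (⟨x, hx⟩ : R)⟫ • b ⟨(t : ℕ), hι t⟩ := by
        apply Subtype.coe_injective
        push_cast [Submodule.coe_sum]
        calc (xU : EuclideanSpace ℝ (Fin d)) = x := rfl
          _ = ((∑ t : Fin r, ⟪bR t, (⟨x, hx⟩ : R)⟫ • bR t : R) : EuclideanSpace ℝ (Fin d)) := by
              rw [hxRrepr]
          _ = ∑ t : Fin r, ⟪bR t, (⟨x, hx⟩ : R)⟫ • (bR t : EuclideanSpace ℝ (Fin d)) := by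
              push_cast [Submodule.coe_sum]
              rfl
          _ = ∑ t : Fin r, ⟪bR t, (⟨x, hx⟩ : R)⟫
                • ((b ⟨(t : ℕ), hι t⟩ : U) : EuclideanSpace ℝ (Fin d)) := by
              simp_rw [hbι]
      rw [hxUsum, inner_sum]
      apply Finset.sum_eq_zero
      intro t _
      rw [Submodule.coe_inner, Submodule.coe_smul, real_inner_smul_right, ← Submodule.coe_inner,
        orthonormal_iff_ite.mp b.orthonormal]
      have hne : jk ≠ ⟨(t : ℕ), hι t⟩ := by
        intro hcon
        apply hjk
        rw [hcon]
        exact t.2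
      rw [if_neg hne, mul_zero]
    -- evaluation functional
    have hrepr : ∑ jk : Fin k, ⟪b jk, xU⟫ • b jk = xU := b.sum_repr' xU
    set evi : EuclideanSpace ℝ (Fin d) →ₗ[ℝ] ℝ :=
      (LinearMap.proj i).comp (WithLp.linearEquiv 2 ℝ (Fin d → ℝ)).toLinearMap with hevi
    have hevix : ∀ y : EuclideanSpace ℝ (Fin d), evi y = y i := fun _ => rfl
    have hfull : ∑ jk : Fin k, ⟪b jk, xU⟫ * (b jk : EuclideanSpace ℝ (Fin d)) i = x i := by
      have := congrArg (evi.comp U.subtype) hrepr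
      rw [map_sum] at this
      simp only [LinearMap.comp_apply, Submodule.coe_subtype] at this
      calc ∑ jk : Fin k, ⟪b jk, xU⟫ * (b jk : EuclideanSpace ℝ (Fin d)) i
          = ∑ jk : Fin k, evi (((⟪b jk, xU⟫ • b jk : U)) : EuclideanSpace ℝ (Fin d)) := by
            apply Finset.sum_congr rfl
            intro jk _
            rw [Submodule.coe_smul, _root_.map_smul, hevix, smul_eq_mul]
        _ = evi ((xU : U) : EuclideanSpace ℝ (Fin d)) := by
            rw [← this]
        _ = x i := rfl
    -- restrict the sum
    have hcast : ∀ j : Fin m, ⟪w j, x⟫ = ⟪b (Fin.castLE hmk j), xU⟫ := by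
      intro j
      exact (Submodule.coe_inner U (b (Fin.castLE hmk j)) xU).symm
    calc ∑ j : Fin m, ⟪w j, x⟫ * (w j) i
        = ∑ j : Fin m, ⟪b (Fin.castLE hmk j), xU⟫
            * (b (Fin.castLE hmk j) : EuclideanSpace ℝ (Fin d)) i := by
          apply Finset.sum_congr rfl
          intro j _
          exact congrArg (· * (w j) i) (hcast j)
      _ = ∑ jk ∈ Finset.univ.map (Fin.castLEEmb hmk),
            ⟪b jk, xU⟫ * (b jk : EuclideanSpace ℝ (Fin d)) i := by
          rw [Finset.sum_map]
          rfl
      _ = ∑ jk : Fin k, ⟪b jk, xU⟫ * (b jk : EuclideanSpace ℝ (Fin d)) i := by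
          apply Finset.sum_subset (Finset.subset_univ _)
          intro jk _ hjk
          have hjkm : ¬ ((jk : ℕ) < m) := by
            intro hcon
            apply hjk
            rw [Finset.mem_map]
            exact ⟨⟨(jk : ℕ), hcon⟩, Finset.mem_univ _, by
              simp [Fin.castLEEmb, Fin.castLE]⟩
          rw [hzero jk (fun hcon => hjkm (lt_of_lt_of_le hcon hrm)), zero_mul]
      _ = x i := hfull
  -- W * Wᵀ * C = C
  have hWWC : W * Wᵀ * C = C := by
    ext i l
    set cl : EuclideanSpace ℝ (Fin d) :=
      (WithLp.equiv 2 (Fin d → ℝ)).symm (fun i' => C i' l) with hcl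
    have hclR : cl ∈ R := by
      refine ⟨(WithLp.equiv 2 (Fin d → ℝ)).symm (Pi.single l 1), ?_⟩
      rw [Matrix.toEuclideanLin_apply_piLp_toLp, WithLp.equiv_symm_apply, WithLp.ofLp_toLp,
        Matrix.mulVec_single]
      rw [hcl, WithLp.equiv_symm_apply]
      congr 1
      funext i'
      simp
    have hcli : ∀ i', cl i' = C i' l := fun i' => rfl
    calc (W * Wᵀ * C) i l = ∑ i', (∑ j, W i j * W i' j) * C i' l := by
          simp [Matrix.mul_apply]
      _ = ∑ j, ⟪w j, cl⟫ * (w j) i := by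
          simp only [Finset.sum_mul]
          rw [Finset.sum_comm]
          apply Finset.sum_congr rfl
          intro j _
          rw [hinner, Finset.sum_mul]
          apply Finset.sum_congr rfl
          intro i' _
          rw [hcli i']
          simp only [hW, Matrix.of_apply]
          ring
      _ = cl i := hexp cl hclR i
      _ = C i l := hcli i
  -- trace computations
  have hPW : P * W = W := by
    ext i j
    rw [hP, Matrix.diagonal_mul]
    by_cases hi : i ∈ S
    · simp [hi]
    · simp [hi, hWsupp i hi j]
  have hWtP : Wᵀ * P = Wᵀ := by
    have := congrArg Matrix.transpose hPW
    rwa [Matrix.transpose_mul, Matrix.diagonal_transpose] at this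
  have hT2 : Wᵀ * C * W = Wᵀ * B * W := by
    rw [hC]
    calc Wᵀ * (P * B * P) * W = (Wᵀ * P) * B * (P * W) := by
          simp only [Matrix.mul_assoc]
      _ = Wᵀ * B * W := by rw [hWtP, hPW]
  have hT3 : (Wᵀ * C * W).trace = C.trace := by
    rw [Matrix.trace_mul_cycle, hWWC]
  have hT1 : (Wᵀ * B * W).trace ≤ (Wᵀ * A * W).trace := by
    have hps : (Wᵀ * (A - B) * W).PosSemidef := by
      have hct : Wᴴ = Wᵀ := by
        ext i j
        simp [Matrix.conjTranspose_apply]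
      have := hAB.conjTranspose_mul_mul_same W
      rwa [hct] at this
    have htr := psd_trace_nonneg_s10 hps
    have hexpand : Wᵀ * (A - B) * W = Wᵀ * A * W - Wᵀ * B * W := by
      rw [Matrix.mul_sub, Matrix.sub_mul]
    rw [hexpand, Matrix.trace_sub] at htr
    linarith
  -- final chain
  have hfrac : (k : ℝ) / (d : ℝ) * B.trace ≤ C.trace := by
    rw [hCtrace, div_mul_eq_mul_div, div_le_iff₀ (by positivity : (0:ℝ) < (d:ℝ))]
    have htrB : B.trace = ∑ i, B i i := rfl
    rw [htrB]
    calc (k : ℝ) * ∑ i, B i i ≤ (d : ℝ) * ∑ i ∈ S, B i i := hSavg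
      _ = (∑ i ∈ S, B i i) * d := by ring
  calc (k : ℝ) / (d : ℝ) * B.trace ≤ C.trace := hfrac
    _ = (Wᵀ * C * W).trace := hT3.symm
    _ = (Wᵀ * B * W).trace := by rw [hT2]
    _ ≤ (Wᵀ * A * W).trace := hT1
end
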